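/- A conformally flat pointwise algebraic curvature condition (vanishing Weyl tensor in dimension n ≥ 4) for the Gauss-equation curvature tensor of α(X,Y) = Σᵢ⟨Xᵢ,Yᵢ⟩ηᵢ with k ≥ 3 implies: for all pairwise distinct indices i, j, ℓ, the vectors η_j − η_i and η_j − η_ℓ are linearly independent. -/

import Mathlib

open RealInnerProductSpace Module

private lemma stmt10_algA (ui uj ul s t : ℝ)
    (P1 : 0 < ui + uj) (P2 : 0 < uj + ul) (P3 : 0 < ui + ul)
    (h0 : ui = 0 ∨ uj = 0 ∨ ul = 0)
    (e1 : s * (uj + ui) + t * uj = 0) (e2 : s * uj + t * (uj + ul) = 0) :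
    s = 0 ∧ t = 0 := by
  rcases h0 with h | h | h
  · have hul : 0 < ul := by linarith
    have huj : 0 < uj := by linarith
    have etl : t * ul = 0 := by linear_combination e2 - e1 + s * h
    have ht : t = 0 := by
      rcases mul_eq_zero.mp etl with ht | h'; · exact ht
      · exact absurd h' (by linarith)
    have es : s * uj = 0 := by linear_combination e1 - s * h - uj * ht
    have hs : s = 0 := by
      rcases mul_eq_zero.mp es with hs | h'; · exact hs
      · exact absurd h' (by linarith)
    exact ⟨hs, ht⟩
  · have hui : 0 < ui := by linarith
    have hul : 0 < ul := by linarith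
    have es : s * ui = 0 := by linear_combination e1 - (s + t) * h
    have hs : s = 0 := by
      rcases mul_eq_zero.mp es with hs | h'; · exact hs
      · exact absurd h' (by linarith)
    have etl : t * ul = 0 := by linear_combination e2 - (s + t) * h
    have ht : t = 0 := by
      rcases mul_eq_zero.mp etl with ht | h'; · exact ht
      · exact absurd h' (by linarith)
    exact ⟨hs, ht⟩
  · have hui : 0 < ui := by linarith
    have huj : 0 < uj := by linarith
    have es : s * ui = 0 := by linear_combination e1 - e2 + t * h
    have hs : s = 0 := by
      rcases mul_eq_zero.mp es with hs | h'; · exact hs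
      · exact absurd h' (by linarith)
    have et : t * uj = 0 := by linear_combination e2 - uj * hs - t * h
    have ht : t = 0 := by
      rcases mul_eq_zero.mp et with ht | h'; · exact ht
      · exact absurd h' (by linarith)
    exact ⟨hs, ht⟩

private lemma stmt10_algB (ui uj ul s t : ℝ)
    (P1 : 0 < ui + uj) (P2 : 0 < uj + ul) (P3 : 0 < ui + ul)
    (e1 : s * uj + t * uj = 0) (e2 : s * ui = 0) (e3 : t * ul = 0) :
    s = 0 ∧ t = 0 := by
  have hs : s = 0 := by
    by_contra hs
    have hui : ui = 0 := by
      rcases mul_eq_zero.mp e2 with h | h; · exact absurd h hs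
      · exact h
    have huj : 0 < uj := by linarith
    have hst : s + t = 0 := by
      have : (s + t) * uj = 0 := by linear_combination e1
      rcases mul_eq_zero.mp this with h | h; · exact h
      · exact absurd h (by linarith)
    have ht : t ≠ 0 := by
      intro h; exact hs (by linarith)
    have hul : ul = 0 := by
      rcases mul_eq_zero.mp e3 with h | h; · exact absurd h ht
      · exact h
    linarith
  refine ⟨hs, ?_⟩
  by_contra ht
  have hul : ul = 0 := by
    rcases mul_eq_zero.mp e3 with h | h; · exact absurd h ht
    · exact h
  have huj : 0 < uj := by linarith
  have : t * uj = 0 := by linear_combination e1 - uj * hs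
  rcases mul_eq_zero.mp this with h | h
  · exact ht h
  · exact absurd h (by linarith)

theorem stmt10 {T N : Type*} [NormedAddCommGroup T] [InnerProductSpace ℝ T]
    [FiniteDimensional ℝ T] [NormedAddCommGroup N] [InnerProductSpace ℝ N]
    (hn : 4 ≤ finrank ℝ T)
    {k : ℕ} (hk : 3 ≤ k) (E : Fin k → Submodule ℝ T) (η : Fin k → N)
    (hne : ∀ i, E i ≠ ⊥)
    (hdist : Function.Injective η)
    (horth : ∀ i j, i ≠ j → ∀ X ∈ E i, ∀ Y ∈ E j, ⟪X, Y⟫ = 0)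
    (hspan : (⨆ i, E i) = ⊤)
    (α : T → T → N)
    (hα : ∀ X Y : T, α X Y =
      ∑ i, ⟪((Submodule.orthogonalProjectionOnto (E i) X : E i) : T),
            ((Submodule.orthogonalProjectionOnto (E i) Y : E i) : T)⟫ • η i)
    -- the Gauss-equation curvature tensor
    (R : T → T → T → T → ℝ)
    (hR : ∀ X Y Z W : T, R X Y Z W = ⟪α X W, α Y Z⟫ - ⟪α X Z, α Y W⟫)
    -- the Ricci tensor, scalar curvature and Weyl tensor of R
    (Ric : T → T → ℝ)
    (hRic : ∀ X Y : T, Ric X Y =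
      ∑ a, R (stdOrthonormalBasis ℝ T a) X Y (stdOrthonormalBasis ℝ T a))
    (scal : ℝ)
    (hscal : scal = ∑ a, Ric (stdOrthonormalBasis ℝ T a) (stdOrthonormalBasis ℝ T a))
    (Weyl : T → T → T → T → ℝ)
    (hWeyl : ∀ X Y Z W : T, Weyl X Y Z W = R X Y Z W
      - (Ric X W * ⟪Y, Z⟫ - Ric X Z * ⟪Y, W⟫
          + Ric Y Z * ⟪X, W⟫ - Ric Y W * ⟪X, Z⟫) / ((finrank ℝ T : ℝ) - 2)
      + scal * (⟪X, W⟫ * ⟪Y, Z⟫ - ⟪X, Z⟫ * ⟪Y, W⟫)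
          / (((finrank ℝ T : ℝ) - 1) * ((finrank ℝ T : ℝ) - 2)))
    -- conformal flatness: the Weyl tensor vanishes
    (hW0 : ∀ X Y Z W : T, Weyl X Y Z W = 0) :
    ∀ i j ℓ : Fin k, i ≠ j → j ≠ ℓ → i ≠ ℓ →
      LinearIndependent ℝ ![η j - η i, η j - η ℓ] := by
  classical
  -- projections of members of the blocks
  have hproj : ∀ p (x : T), x ∈ E p → ∀ m,
      ((Submodule.orthogonalProjectionOnto (E m) x : E m) : T) = if m = p then x else 0 := by
    intro p x hx m
    by_cases h : m = p
    · subst h; simp [(by have := Submodule.starProjection_eq_self_iff.mpr hx; rwa [Submodule.starProjection_apply] at this : ((Submodule.orthogonalProjectionOnto (E m) x : E m) : T) = x)]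
    · rw [if_neg h]
      rw [Submodule.orthogonalProjectionOnto_apply_of_mem_orthogonal, Submodule.coe_zero]
      rw [Submodule.mem_orthogonal]
      intro u hu
      exact horth m p h u hu x hx
  have halpha : ∀ q (y : T), y ∈ E q → ∀ X, α X y = ⟪X, y⟫ • η q := by
    intro q y hy X
    rw [hα]
    rw [Finset.sum_eq_single q]
    · rw [hproj q y hy q, if_pos rfl, ← Submodule.starProjection_apply, Submodule.inner_starProjection_left_eq_right,
        Submodule.starProjection_eq_self_iff.mpr hy]
    · intro m _ hm
      rw [hproj q y hy m, if_neg hm, inner_zero_right, zero_smul]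
    · intro h; exact absurd (Finset.mem_univ q) h
  have hasymm : ∀ X Y, α X Y = α Y X := by
    intro X Y; rw [hα, hα]
    exact Finset.sum_congr rfl fun m _ => by rw [real_inner_comm]
  set B := stdOrthonormalBasis ℝ T with hB
  set H := ∑ a, α (B a) (B a) with hH
  set r : Fin k → ℝ := fun p => ⟪H, η p⟫ - ⟪η p, η p⟫ with hr
  -- diagonal Ricci values
  have hRicdiag : ∀ p (x : T), x ∈ E p → ‖x‖ = 1 → Ric x x = r p := by
    intro p x hx hx1
    have hxx : ⟪x, x⟫ = (1:ℝ) := by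
      rw [real_inner_self_eq_norm_sq, hx1]; norm_num
    have haxx : α x x = η p := by rw [halpha p x hx x, hxx, one_smul]
    have step : ∀ a, R (B a) x x (B a)
        = ⟪α (B a) (B a), η p⟫ - (⟪x, B a⟫ * ⟪B a, x⟫) * ⟪η p, η p⟫ := by
      intro a
      rw [hR]
      rw [hasymm x (B a), haxx, halpha p x hx (B a)]
      rw [real_inner_smul_left, real_inner_smul_right]
      ring_nf
      rw [real_inner_comm x (B a)]
      ring
    rw [hRic, Finset.sum_congr rfl fun a _ => step a, Finset.sum_sub_distrib,
      ← sum_inner, ← hH, ← Finset.sum_mul, B.sum_inner_mul_inner x x, hxx, one_mul]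
  set A : Fin k → ℝ := fun p => r p / ((finrank ℝ T : ℝ) - 2) with hA
  set c : ℝ := scal / (((finrank ℝ T : ℝ) - 1) * ((finrank ℝ T : ℝ) - 2)) with hc
  -- the key relation coming from the vanishing of the Weyl tensor
  have key : ∀ p q (x y : T), x ∈ E p → y ∈ E q → ‖x‖ = 1 → ‖y‖ = 1 → ⟪x, y⟫ = 0 →
      ⟪η p, η q⟫ = A p + A q - c := by
    intro p q x y hx hy hx1 hy1 hxy
    have hxx : ⟪x, x⟫ = (1:ℝ) := by
      rw [real_inner_self_eq_norm_sq, hx1]; norm_num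
    have hyy : ⟪y, y⟫ = (1:ℝ) := by
      rw [real_inner_self_eq_norm_sq, hy1]; norm_num
    have hyx : ⟪y, x⟫ = (0:ℝ) := by rw [real_inner_comm]; exact hxy
    have haxx : α x x = η p := by rw [halpha p x hx x, hxx, one_smul]
    have hayy : α y y = η q := by rw [halpha q y hy y, hyy, one_smul]
    have haxy : α x y = 0 := by rw [halpha q y hy x, hxy, zero_smul]
    have hayx : α y x = 0 := by rw [halpha p x hx y, hyx, zero_smul]
    have hRval : R x y y x = ⟪η p, η q⟫ := by
      rw [hR, haxx, hayy, haxy, hayx, inner_zero_left, sub_zero]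
    have h := hW0 x y y x
    rw [hWeyl, hRval, hRicdiag p x hx hx1, hRicdiag q y hy hy1, hxx, hyy, hxy, hyx] at h
    have h2 : (r p * 1 - Ric x y * 0 + r q * 1 - Ric y x * 0) = r p + r q := by ring
    have h3 : scal * (1 * 1 - 0 * 0) = scal := by ring
    rw [h2, h3] at h
    rw [hA]
    rw [← add_div]
    rw [hc]
    linarith
  -- a unit vector in each block
  have hunit : ∀ p, ∃ x, x ∈ E p ∧ ‖x‖ = 1 := by
    intro p
    obtain ⟨x, hx, hx0⟩ := (E p).ne_bot_iff.mp (hne p)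
    refine ⟨‖x‖⁻¹ • x, (E p).smul_mem _ hx, ?_⟩
    rw [norm_smul, norm_inv, norm_norm, inv_mul_cancel₀ (norm_ne_zero_iff.mpr hx0)]
  have pairEq : ∀ p q, p ≠ q → ⟪η p, η q⟫ = A p + A q - c := by
    intro p q hpq
    obtain ⟨x, hx, hx1⟩ := hunit p
    obtain ⟨y, hy, hy1⟩ := hunit q
    exact key p q x y hx hy hx1 hy1 (horth p q hpq x hx y hy)
  set u : Fin k → ℝ := fun p => ⟪η p, η p⟫ - 2 * A p + c with hu
  -- blocks of dimension at least two
  have diagEq : ∀ p, 2 ≤ finrank ℝ (E p) → u p = 0 := by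
    intro p h2
    set b := stdOrthonormalBasis ℝ (E p) with hb
    have h0 : (0 : ℕ) < finrank ℝ (E p) := by omega
    have h1 : (1 : ℕ) < finrank ℝ (E p) := by omega
    set x : E p := b ⟨0, h0⟩ with hxdef
    set y : E p := b ⟨1, h1⟩ with hydef
    have hne01 : (⟨0, h0⟩ : Fin (finrank ℝ (E p))) ≠ ⟨1, h1⟩ :=
      Fin.ne_of_val_ne (by norm_num)
    have hx1 : ‖(x : T)‖ = 1 := by
      rw [← Submodule.coe_norm]; exact b.orthonormal.1 _
    have hy1 : ‖(y : T)‖ = 1 := by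
      rw [← Submodule.coe_norm]; exact b.orthonormal.1 _
    have hxy : ⟪(x : T), (y : T)⟫ = (0:ℝ) := by
      rw [← Submodule.coe_inner]; exact b.orthonormal.2 hne01
    have := key p p (x : T) (y : T) x.2 y.2 hx1 hy1 hxy
    rw [hu]
    simp only []
    linarith
  have F1 : ∀ p q, p ≠ q → ⟪η p - η q, η p - η q⟫ = u p + u q := by
    intro p q hpq
    have e1 := pairEq p q hpq
    have e2 : ⟪η q, η p⟫ = ⟪η p, η q⟫ := real_inner_comm _ _
    simp only [inner_sub_left, inner_sub_right, hu]
    linarith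
  have F2 : ∀ p q m, p ≠ q → p ≠ m → q ≠ m → ⟪η p - η q, η p - η m⟫ = u p := by
    intro p q m hpq hpm hqm
    have e1 := pairEq p m hpm
    have e2 := pairEq q p hpq.symm
    have e3 := pairEq q m hqm
    simp only [inner_sub_left, inner_sub_right, hu]
    linarith
  have F2' : ∀ p q m, p ≠ q → p ≠ m → q ≠ m → ⟪η p - η q, η q - η m⟫ = -u q := by
    intro p q m hpq hpm hqm
    have e1 := pairEq p q hpq
    have e2 := pairEq p m hpm
    have e3 := pairEq q m hqm
    simp only [inner_sub_left, inner_sub_right, hu]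
    linarith
  have F3 : ∀ p q m m', p ≠ m → p ≠ m' → q ≠ m → q ≠ m' →
      ⟪η p - η q, η m - η m'⟫ = 0 := by
    intro p q m m' h1 h2 h3 h4
    have e1 := pairEq p m h1
    have e2 := pairEq p m' h2
    have e3 := pairEq q m h3
    have e4 := pairEq q m' h4
    simp only [inner_sub_left, inner_sub_right]
    linarith
  have Fpos : ∀ p q, p ≠ q → 0 < u p + u q := by
    intro p q hpq
    have hne0 : η p - η q ≠ 0 := sub_ne_zero.mpr fun h => hpq (hdist h)
    have hpos : (0:ℝ) < ⟪η p - η q, η p - η q⟫ := by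
      rw [real_inner_self_eq_norm_sq]
      have : 0 < ‖η p - η q‖ := norm_pos_iff.mpr hne0
      positivity
    rwa [F1 p q hpq] at hpos
  intro i j ℓ hij hjl hil
  -- the dichotomy: a big block among i, j, ℓ or a fourth index
  have hdich : (u i = 0 ∨ u j = 0 ∨ u ℓ = 0) ∨ ∃ m : Fin k, m ≠ i ∧ m ≠ j ∧ m ≠ ℓ := by
    by_cases hm : ∃ m : Fin k, m ≠ i ∧ m ≠ j ∧ m ≠ ℓ
    · exact Or.inr hm
    · push_neg at hm
      left
      have hcover : ∀ m : Fin k, m = i ∨ m = j ∨ m = ℓ := by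
        intro m
        by_cases h1 : m = i; · exact Or.inl h1
        by_cases h2 : m = j; · exact Or.inr (Or.inl h2)
        exact Or.inr (Or.inr (hm m h1 h2))
      have hle : (⊤ : Submodule ℝ T) ≤ E i ⊔ E j ⊔ E ℓ := by
        rw [← hspan]
        refine iSup_le fun m => ?_
        rcases hcover m with h | h | h <;> subst h
        · exact le_sup_of_le_left le_sup_left
        · exact le_sup_of_le_left le_sup_right
        · exact le_sup_right
      have h4 : finrank ℝ T ≤ finrank ℝ ↥(E i ⊔ E j ⊔ E ℓ) := by
        calc finrank ℝ T = finrank ℝ (⊤ : Submodule ℝ T) := (finrank_top ℝ T).symm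
          _ ≤ _ := Submodule.finrank_mono hle
      have h5 : finrank ℝ ↥(E i ⊔ E j ⊔ E ℓ)
          ≤ finrank ℝ (E i) + finrank ℝ (E j) + finrank ℝ (E ℓ) :=
        le_trans (Submodule.finrank_add_le_finrank_add_finrank _ _)
          (by
            have := Submodule.finrank_add_le_finrank_add_finrank (E i) (E j)
            omega)
      have : 2 ≤ finrank ℝ (E i) ∨ 2 ≤ finrank ℝ (E j) ∨ 2 ≤ finrank ℝ (E ℓ) := by omega
      rcases this with h | h | h
      · exact Or.inl (diagEq i h)
      · exact Or.inr (Or.inl (diagEq j h))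
      · exact Or.inr (Or.inr (diagEq ℓ h))
  rw [LinearIndependent.pair_iff]
  intro s t hst
  have inner0 : ∀ z : N, s * ⟪η j - η i, z⟫ + t * ⟪η j - η ℓ, z⟫ = 0 := by
    intro z
    have h := congrArg (fun w => (inner ℝ w z : ℝ)) hst
    simpa [inner_add_left, real_inner_smul_left] using h
  rcases hdich with h0 | ⟨m, hmi, hmj, hml⟩
  · -- case A
    have e1 : s * (u j + u i) + t * u j = 0 := by
      have h := inner0 (η j - η i)
      rwa [F1 j i hij.symm, F2 j ℓ i hjl hij.symm (Ne.symm hil)] at h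
    have e2 : s * u j + t * (u j + u ℓ) = 0 := by
      have h := inner0 (η j - η ℓ)
      rwa [F2 j i ℓ hij.symm hjl hil, F1 j ℓ hjl] at h
    exact stmt10_algA (u i) (u j) (u ℓ) s t (Fpos i j hij) (Fpos j ℓ hjl) (Fpos i ℓ hil)
      h0 e1 e2
  · -- case B
    have e1 : s * u j + t * u j = 0 := by
      have h := inner0 (η j - η m)
      rwa [F2 j i m hij.symm hmj.symm (fun h => hmi h.symm),
        F2 j ℓ m hjl hmj.symm (fun h => hml h.symm)] at h
    have e2 : s * u i = 0 := by
      have h := inner0 (η i - η m)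
      rw [F2' j i m hij.symm hmj.symm (fun h => hmi h.symm),
        F3 j ℓ i m hij.symm hmj.symm (Ne.symm hil) (fun h => hml h.symm)] at h
      linear_combination -h
    have e3 : t * u ℓ = 0 := by
      have h := inner0 (η ℓ - η m)
      rw [F3 j i ℓ m hjl hmj.symm hil (fun h => hmi h.symm),
        F2' j ℓ m hjl hmj.symm (fun h => hml h.symm)] at h
      linear_combination -h
    exact stmt10_algB (u i) (u j) (u ℓ) s t (Fpos i j hij) (Fpos j ℓ hjl) (Fpos i ℓ hil)
      e1 e2 e3
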